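/- The loss-penalty matrix lies in the interior of the dual cones for large α: let E be a set of pairs (i,j), i ≠ j, of indices in {1,…,n} such that every index in {1,…,n} is an endpoint of at least one pair in E, and for each l = (i,j) ∈ E let M_l be a 2×2 complex Hermitian matrix. Define M(α) = Σ_{l=(i,j)∈E} [e_i, e_j](M_l + α·I_2)[e_i, e_j]ᵀ. Then there exists α0 > 0 such that for every α ≥ α0 there exists ε > 0 with tr(H (M(α) − ε·I_n)) ≥ 0 for every H in the parabolic cone C3(E); consequently, since C1 ⊆ C2(E) ⊆ C3(E), the matrix M(α) − ε·I_n also lies in the dual cones of the SOCP cone C2(E) and of the PSD cone C1. -/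

import Mathlib

open Matrix Finset
open scoped ComplexOrder

/-- The `n×n` matrix `[e_i, e_j] A [e_i, e_j]ᵀ`. -/
noncomputable def emb2 {n : ℕ} (i j : Fin n) (A : Matrix (Fin 2) (Fin 2) ℂ) :
    Matrix (Fin n) (Fin n) ℂ :=
  Matrix.single i i (A 0 0) + Matrix.single i j (A 0 1) +
    Matrix.single j i (A 1 0) + Matrix.single j j (A 1 1)

/-- The PSD cone `C1`. -/
def PSDCone (n : ℕ) : Set (Matrix (Fin n) (Fin n) ℂ) := {H | H.PosSemidef}

/-- The SOCP cone `C2(E)`. -/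
def SOCPCone (n : ℕ) (E : Set (Fin n × Fin n)) : Set (Matrix (Fin n) (Fin n) ℂ) :=
  {H | H.IsHermitian ∧ (∀ i, 0 ≤ (H i i).re) ∧
    ∀ e ∈ E, Complex.normSq (H e.1 e.2) ≤ (H e.1 e.1).re * (H e.2 e.2).re}

/-- The parabolic cone `C3(E)`. -/
def ParabolicCone (n : ℕ) (E : Set (Fin n × Fin n)) : Set (Matrix (Fin n) (Fin n) ℂ) :=
  {H | H.IsHermitian ∧ (∀ i, 0 ≤ (H i i).re) ∧
    ∀ e ∈ E, 2 * |(H e.1 e.2).re| ≤ (H e.1 e.1).re + (H e.2 e.2).re ∧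
      2 * |(H e.1 e.2).im| ≤ (H e.1 e.1).re + (H e.2 e.2).re}

lemma trace_mul_std {n : ℕ} (H : Matrix (Fin n) (Fin n) ℂ) (a b : Fin n) (c : ℂ) :
    (H * Matrix.single a b c).trace = c * H b a := by
  simp only [Matrix.trace, Matrix.diag, Matrix.mul_apply, Matrix.single,
    Matrix.of_apply, ite_and, mul_ite, mul_zero, Finset.sum_ite_eq, Finset.mem_univ, if_true]
  simp [Finset.sum_ite_eq, mul_comm]

lemma trace_mul_emb2 {n : ℕ} (H : Matrix (Fin n) (Fin n) ℂ) (i j : Fin n)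
    (A : Matrix (Fin 2) (Fin 2) ℂ) :
    (H * emb2 i j A).trace
      = A 0 0 * H i i + A 0 1 * H j i + A 1 0 * H i j + A 1 1 * H j j := by
  simp [emb2, Matrix.mul_add, Matrix.trace_add, trace_mul_std]

lemma psd_quad {n : ℕ} {H : Matrix (Fin n) (Fin n) ℂ} (hH : H.PosSemidef)
    (i j : Fin n) (c : ℂ) (hc : Complex.normSq c = 1) :
    0 ≤ (H i i).re + (H j j).re + 2 * (c * H i j).re := by
  have h := hH.dotProduct_mulVec_nonneg ((Pi.single i 1 + Pi.single j c : Fin n → ℂ))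
  have hs : star (Pi.single i 1 + Pi.single j c : Fin n → ℂ)
      = (Pi.single i 1 + Pi.single j (starRingEnd ℂ c) : Fin n → ℂ) := by
    funext k
    simp only [Pi.star_apply, Pi.add_apply, Pi.single_apply, star_add, apply_ite star,
      star_one, star_zero]
    rfl
  rw [hs] at h
  have hji : H j i = starRingEnd ℂ (H i j) := (hH.1.apply j i).symm
  have hre := (Complex.le_def.mp h).1
  simp only [Matrix.mulVec_add, Matrix.mulVec_single, dotProduct_add,
    add_dotProduct, single_dotProduct, Pi.add_apply, Pi.smul_apply, Matrix.col_apply,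
    op_smul_eq_mul, hji, mul_one, one_mul] at hre
  simp only [Complex.add_re, Complex.mul_re, Complex.mul_im, Complex.one_re, Complex.one_im,
    Complex.conj_re, Complex.conj_im, Complex.zero_re] at hre
  have hc' : c.re * c.re + c.im * c.im = 1 := hc
  have hqq : (H j j).re * (c.re * c.re + c.im * c.im) = (H j j).re * 1 := by rw [hc']
  simp only [Complex.mul_re]
  nlinarith [hre, hqq]

lemma psd_mem_parabolic {n : ℕ} {H : Matrix (Fin n) (Fin n) ℂ} (hH : H.PosSemidef)
    (E : Set (Fin n × Fin n)) : H ∈ ParabolicCone n E := by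
  have hdiag : ∀ i, 0 ≤ (H i i).re := by
    intro i
    have h := psd_quad hH i i 1 (by simp)
    simp only [one_mul] at h
    linarith
  refine ⟨hH.1, hdiag, fun e _ => ?_⟩
  obtain ⟨i, j⟩ := e
  have h1 := psd_quad hH i j 1 (by simp)
  have h2 := psd_quad hH i j (-1) (by simp)
  have h3 := psd_quad hH i j Complex.I (by simp)
  have h4 := psd_quad hH i j (-Complex.I) (by simp)
  simp only [one_mul, neg_mul, Complex.neg_re, Complex.mul_re, Complex.I_re, Complex.I_im,
    zero_mul, one_mul, zero_sub, neg_neg] at h1 h2 h3 h4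
  constructor
  · simp only
    rcases abs_cases (H i j).re with ⟨h, _⟩ | ⟨h, _⟩ <;> rw [h] <;> linarith
  · simp only
    rcases abs_cases (H i j).im with ⟨h, _⟩ | ⟨h, _⟩ <;> rw [h] <;> linarith

lemma socp_mem_parabolic {n : ℕ} {H : Matrix (Fin n) (Fin n) ℂ}
    {E : Set (Fin n × Fin n)} (hH : H ∈ SOCPCone n E) : H ∈ ParabolicCone n E := by
  obtain ⟨h1, h2, h3⟩ := hH
  refine ⟨h1, h2, fun e he => ?_⟩
  have hns := h3 e he
  rw [Complex.normSq_apply] at hns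
  have hp := h2 e.1
  have hq := h2 e.2
  set x := (H e.1 e.2).re
  set y := (H e.1 e.2).im
  set p := (H e.1 e.1).re
  set q := (H e.2 e.2).re
  constructor
  · nlinarith [sq_abs x, abs_nonneg x, sq_nonneg (p - q), sq_nonneg y, sq_nonneg (p + q)]
  · nlinarith [sq_abs y, abs_nonneg y, sq_nonneg (p - q), sq_nonneg x, sq_nonneg (p + q)]

lemma edge_re {n : ℕ} {H : Matrix (Fin n) (Fin n) ℂ} (hH : H.IsHermitian)
    {B : Matrix (Fin 2) (Fin 2) ℂ} (hB : B.IsHermitian) (α : ℝ) (i j : Fin n) :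
    ((H * emb2 i j (B + (α : ℂ) • (1 : Matrix (Fin 2) (Fin 2) ℂ))).trace).re
      = ((B 0 0).re + α) * (H i i).re + ((B 1 1).re + α) * (H j j).re
        + 2 * ((B 0 1).re * (H i j).re + (B 0 1).im * (H i j).im) := by
  have hji : H j i = starRingEnd ℂ (H i j) := (hH.apply j i).symm
  have hB10 : B 1 0 = starRingEnd ℂ (B 0 1) := (hB.apply 1 0).symm
  have hii : (H i i).im = 0 := by
    have := hH.apply i i; rw [Complex.star_def, Complex.conj_eq_iff_im] at this; exact this
  have hjj : (H j j).im = 0 := by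
    have := hH.apply j j; rw [Complex.star_def, Complex.conj_eq_iff_im] at this; exact this
  have hB00 : (B 0 0).im = 0 := by
    have := hB.apply 0 0; rw [Complex.star_def, Complex.conj_eq_iff_im] at this; exact this
  have hB11 : (B 1 1).im = 0 := by
    have := hB.apply 1 1; rw [Complex.star_def, Complex.conj_eq_iff_im] at this; exact this
  rw [trace_mul_emb2]
  have e00 : (B + (α : ℂ) • (1 : Matrix (Fin 2) (Fin 2) ℂ)) 0 0 = B 0 0 + (α : ℂ) := by
    simp [Matrix.one_apply]
  have e11 : (B + (α : ℂ) • (1 : Matrix (Fin 2) (Fin 2) ℂ)) 1 1 = B 1 1 + (α : ℂ) := by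
    simp [Matrix.one_apply]
  have e01 : (B + (α : ℂ) • (1 : Matrix (Fin 2) (Fin 2) ℂ)) 0 1 = B 0 1 := by
    simp [Matrix.one_apply]
  have e10 : (B + (α : ℂ) • (1 : Matrix (Fin 2) (Fin 2) ℂ)) 1 0 = B 1 0 := by
    simp [Matrix.one_apply]
  rw [e00, e11, e01, e10, hji, hB10]
  simp only [Complex.add_re, Complex.mul_re, Complex.ofReal_re, Complex.ofReal_im,
    Complex.add_im, Complex.conj_re, Complex.conj_im, hii, hjj, hB00, hB11]
  ring


/-- For an edge set covering all indices and Hermitian `2×2` blocks `M_l`, the matrix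
`M(α) = Σ_{l=(i,j)∈E} [e_i,e_j](M_l + α·I₂)[e_i,e_j]ᵀ` lies, for all sufficiently large
`α`, in the interior of the dual of the parabolic cone `C3(E)` — i.e. `M(α) − ε·I` is in
the dual cone of `C3(E)` for some `ε > 0` — and hence also in the duals of the SOCP cone
`C2(E)` and of the PSD cone `C1`. -/
theorem lossPenaltyMatrix_interior_dual (n : ℕ) (hn : 1 ≤ n)
    (E : Finset (Fin n × Fin n))
    (hE : ∀ e ∈ E, e.1 ≠ e.2)
    (hcover : ∀ i : Fin n, ∃ e ∈ E, i = e.1 ∨ i = e.2)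
    (Ml : Fin n × Fin n → Matrix (Fin 2) (Fin 2) ℂ)
    (hMl : ∀ e ∈ E, (Ml e).IsHermitian) :
    ∃ α0 : ℝ, 0 < α0 ∧ ∀ α : ℝ, α0 ≤ α →
      ∃ ε : ℝ, 0 < ε ∧
        (∀ H ∈ ParabolicCone n ↑E,
          0 ≤ ((H * ((∑ e ∈ E, emb2 e.1 e.2 (Ml e + (α : ℂ) • (1 : Matrix (Fin 2) (Fin 2) ℂ)))
                - (ε : ℂ) • (1 : Matrix (Fin n) (Fin n) ℂ))).trace).re) ∧
        (∀ H ∈ SOCPCone n ↑E,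
          0 ≤ ((H * ((∑ e ∈ E, emb2 e.1 e.2 (Ml e + (α : ℂ) • (1 : Matrix (Fin 2) (Fin 2) ℂ)))
                - (ε : ℂ) • (1 : Matrix (Fin n) (Fin n) ℂ))).trace).re) ∧
        (∀ H ∈ PSDCone n,
          0 ≤ ((H * ((∑ e ∈ E, emb2 e.1 e.2 (Ml e + (α : ℂ) • (1 : Matrix (Fin 2) (Fin 2) ℂ)))
                - (ε : ℂ) • (1 : Matrix (Fin n) (Fin n) ℂ))).trace).re) := by
  classical
  set c : Fin n × Fin n → ℝ := fun e =>
    |(Ml e 0 0).re| + |(Ml e 1 1).re| + |(Ml e 0 1).re| + |(Ml e 0 1).im| with hc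
  set C : ℝ := ∑ e ∈ E, c e with hC
  have hc0 : ∀ e, 0 ≤ c e := fun e => by positivity
  have hce : ∀ e ∈ E, c e ≤ C := fun e he =>
    Finset.single_le_sum (fun e' _ => hc0 e') he
  have hC0 : 0 ≤ C := Finset.sum_nonneg fun e' _ => hc0 e'
  refine ⟨C + 1, by positivity, fun α hα => ?_⟩
  have key : ∀ H ∈ ParabolicCone n (↑E : Set (Fin n × Fin n)),
      0 ≤ ((H * ((∑ e ∈ E, emb2 e.1 e.2 (Ml e + (α : ℂ) • (1 : Matrix (Fin 2) (Fin 2) ℂ)))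
            - (((1:ℝ) : ℂ)) • (1 : Matrix (Fin n) (Fin n) ℂ))).trace).re := by
    intro H hH
    obtain ⟨hHh, hdiag, hpar⟩ := hH
    have hε1 : (((1:ℝ) : ℂ)) • (1 : Matrix (Fin n) (Fin n) ℂ) = 1 := by norm_num
    rw [hε1, mul_sub, mul_one, Matrix.trace_sub, Complex.sub_re, Matrix.mul_sum,
      Matrix.trace_sum, Complex.re_sum]
    have htr : (Matrix.trace H).re = ∑ i, (H i i).re := by
      rw [Matrix.trace]; exact Complex.re_sum _ _
    rw [htr]
    have hedge : ∀ e ∈ E,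
        (α - C) * ((H e.1 e.1).re + (H e.2 e.2).re)
          ≤ ((H * emb2 e.1 e.2 (Ml e + (α : ℂ) • (1 : Matrix (Fin 2) (Fin 2) ℂ))).trace).re := by
      intro e he
      rw [edge_re hHh (hMl e he) α e.1 e.2]
      have hp := hdiag e.1
      have hq := hdiag e.2
      obtain ⟨hx, hy⟩ := hpar e (by exact_mod_cast he)
      have hcc := hce e he
      set b := Ml e 0 1
      set x := (H e.1 e.2).re
      set y := (H e.1 e.2).im
      set p := (H e.1 e.1).re
      set q := (H e.2 e.2).re
      have t1 : (0:ℝ) ≤ ((Ml e 0 0).re + |(Ml e 0 0).re|) * p :=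
        mul_nonneg (by linarith [neg_abs_le (Ml e 0 0).re]) hp
      have t2 : (0:ℝ) ≤ ((Ml e 1 1).re + |(Ml e 1 1).re|) * q :=
        mul_nonneg (by linarith [neg_abs_le (Ml e 1 1).re]) hq
      have t3 : |b.re| * (2 * |x|) ≤ |b.re| * (p + q) :=
        mul_le_mul_of_nonneg_left hx (abs_nonneg b.re)
      have t4 : |b.im| * (2 * |y|) ≤ |b.im| * (p + q) :=
        mul_le_mul_of_nonneg_left hy (abs_nonneg b.im)
      have t5 : (0:ℝ) ≤ (C - c e) * (p + q) :=
        mul_nonneg (by linarith) (by linarith)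
      have t6 : -(|b.re| * |x|) ≤ b.re * x := by
        rw [← abs_mul]; exact neg_abs_le _
      have t7 : -(|b.im| * |y|) ≤ b.im * y := by
        rw [← abs_mul]; exact neg_abs_le _
      have hcc' : |(Ml e 0 0).re| + |(Ml e 1 1).re| + |b.re| + |b.im| ≤ C := hcc
      nlinarith [t1, t2, t3, t4, t5, t6, t7, mul_nonneg (abs_nonneg (Ml e 0 0).re) hq,
        mul_nonneg (abs_nonneg (Ml e 1 1).re) hp, hp, hq]
    have hsum : (α - C) * ∑ e ∈ E, ((H e.1 e.1).re + (H e.2 e.2).re)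
        ≤ ∑ e ∈ E,
          ((H * emb2 e.1 e.2 (Ml e + (α : ℂ) • (1 : Matrix (Fin 2) (Fin 2) ℂ))).trace).re := by
      rw [Finset.mul_sum]
      exact Finset.sum_le_sum hedge
    have hSE0 : 0 ≤ ∑ e ∈ E, ((H e.1 e.1).re + (H e.2 e.2).re) :=
      Finset.sum_nonneg fun e _ => add_nonneg (hdiag e.1) (hdiag e.2)
    have hcov : ∑ i, (H i i).re ≤ ∑ e ∈ E, ((H e.1 e.1).re + (H e.2 e.2).re) := by
      choose f hfE hfi using hcover
      have hfib := Finset.sum_fiberwise_of_maps_to (fun i (_ : i ∈ Finset.univ) => hfE i)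
        (fun i => (H i i).re)
      rw [← hfib]
      refine Finset.sum_le_sum fun e he => ?_
      have hsub : Finset.univ.filter (fun i => f i = e) ⊆ {e.1, e.2} := by
        intro i hi
        rw [Finset.mem_filter] at hi
        rcases hfi i with h | h
        · exact Finset.mem_insert.mpr (Or.inl (by rw [h, hi.2]))
        · refine Finset.mem_insert.mpr (Or.inr ?_)
          rw [Finset.mem_singleton, h, hi.2]
      calc ∑ i ∈ Finset.univ.filter (fun i => f i = e), (H i i).re
          ≤ ∑ i ∈ ({e.1, e.2} : Finset (Fin n)), (H i i).re :=
            Finset.sum_le_sum_of_subset_of_nonneg hsub (fun k _ _ => hdiag k)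
        _ = (H e.1 e.1).re + (H e.2 e.2).re := Finset.sum_pair (hE e he)
    have hαC : 1 ≤ α - C := by linarith
    have hstep : ∑ e ∈ E, ((H e.1 e.1).re + (H e.2 e.2).re)
        ≤ (α - C) * ∑ e ∈ E, ((H e.1 e.1).re + (H e.2 e.2).re) := by
      nlinarith [hSE0, hαC]
    linarith [hsum, hcov, hstep]
  exact ⟨1, one_pos, fun H hH => key H hH,
    fun H hH => key H (socp_mem_parabolic hH),
    fun H hH => key H (psd_mem_parabolic hH _)⟩
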